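/- Explicit solution of the coupled backstress–projection system: let b > 0, g ≥ 0, and let σ*, α_prev ∈ S_d be given. Define α := α_prev + (b/(b+1))(σ* - α_prev - Φ_g(σ* - α_prev)) and σ := σ* - (1/b)(α - α_prev). Then α - α_prev = (b/(b+1))((σ*)^ - α_prev - Φ_g(σ* - α_prev)) and the pair (σ, α) satisfies the system: α - α_prev = b(σ* - σ) in the deviatoric part together with tr α = tr α_prev, tr σ = tr σ*, and σ - α = Φ_g(σ* - α). -/

import Mathlib

open Matrix BigOperators

/-- Frobenius inner product on d×d real matrices. -/
noncomputable def finner {d : ℕ} (A B : Matrix (Fin d) (Fin d) ℝ) : ℝ :=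
  ∑ i, ∑ j, A i j * B i j

/-- Frobenius norm. -/
noncomputable def fnorm {d : ℕ} (A : Matrix (Fin d) (Fin d) ℝ) : ℝ :=
  Real.sqrt (finner A A)

/-- Deviatoric part: A - (tr A / d) • I. -/
noncomputable def dev {d : ℕ} (A : Matrix (Fin d) (Fin d) ℝ) : Matrix (Fin d) (Fin d) ℝ :=
  A - (A.trace / (d : ℝ)) • (1 : Matrix (Fin d) (Fin d) ℝ)

/-- Pointwise projection onto {|τ^D| ≤ R}. -/
noncomputable def Phi {d : ℕ} (R : ℝ) (A : Matrix (Fin d) (Fin d) ℝ) :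
    Matrix (Fin d) (Fin d) ℝ :=
  if fnorm (dev A) ≤ R then A
  else (A.trace / (d : ℝ)) • (1 : Matrix (Fin d) (Fin d) ℝ) + (R / fnorm (dev A)) • dev A

section helpers
variable {d : ℕ}

lemma dev_trace (hd : (d:ℝ) ≠ 0) (A : Matrix (Fin d) (Fin d) ℝ) :
    (dev A).trace = 0 := by
  simp only [dev, Matrix.trace_sub, Matrix.trace_smul, Matrix.trace_one, smul_eq_mul]
  field_simp
  simp

lemma dev_sub (A B : Matrix (Fin d) (Fin d) ℝ) : dev (A - B) = dev A - dev B := by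
  simp only [dev, Matrix.trace_sub, sub_div, sub_smul]
  abel

lemma dev_smul (c : ℝ) (A : Matrix (Fin d) (Fin d) ℝ) : dev (c • A) = c • dev A := by
  simp only [dev, Matrix.trace_smul, smul_eq_mul, mul_div_assoc, mul_smul, smul_sub]

lemma dev_of_trace_zero (A : Matrix (Fin d) (Fin d) ℝ) (h : A.trace = 0) : dev A = A := by
  simp [dev, h]

lemma finner_self_nonneg (A : Matrix (Fin d) (Fin d) ℝ) : 0 ≤ finner A A :=
  Finset.sum_nonneg fun i _ => Finset.sum_nonneg fun j _ => mul_self_nonneg _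

lemma finner_smul_smul (s : ℝ) (A : Matrix (Fin d) (Fin d) ℝ) :
    finner (s • A) (s • A) = s ^ 2 * finner A A := by
  simp only [finner, Matrix.smul_apply, smul_eq_mul, Finset.mul_sum]
  refine Finset.sum_congr rfl fun i _ => Finset.sum_congr rfl fun j _ => by ring

lemma fnorm_smul (s : ℝ) (A : Matrix (Fin d) (Fin d) ℝ) :
    fnorm (s • A) = |s| * fnorm A := by
  rw [fnorm, finner_smul_smul, Real.sqrt_mul (sq_nonneg s), Real.sqrt_sq_eq_abs, fnorm]

lemma Phi_of_le {R : ℝ} {A : Matrix (Fin d) (Fin d) ℝ} (h : fnorm (dev A) ≤ R) :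
    Phi R A = A := by unfold Phi; rw [if_pos h]

lemma Phi_of_gt {R : ℝ} {A : Matrix (Fin d) (Fin d) ℝ} (h : R < fnorm (dev A)) :
    Phi R A = (A.trace / (d : ℝ)) • (1 : Matrix (Fin d) (Fin d) ℝ)
      + (R / fnorm (dev A)) • dev A := by unfold Phi; rw [if_neg (not_le.mpr h)]

end helpers

/-- explicit solution of the coupled backstress–projection system. -/
theorem backstress_projection_system {d : ℕ} (hd : 2 ≤ d) (b g : ℝ)
    (hb : 0 < b) (hg : 0 ≤ g)
    (σs αprev : Matrix (Fin d) (Fin d) ℝ) (hσs : σs.IsSymm) (hαprev : αprev.IsSymm)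
    (α σ : Matrix (Fin d) (Fin d) ℝ)
    (hα : α = αprev + (b / (b + 1)) • (σs - αprev - Phi g (σs - αprev)))
    (hσ : σ = σs - (1 / b) • (α - αprev)) :
    α - αprev = (b / (b + 1)) • (σs - αprev - Phi g (σs - αprev)) ∧
    dev (α - αprev) = b • dev (σs - σ) ∧
    α.trace = αprev.trace ∧
    σ.trace = σs.trace ∧
    σ - α = Phi g (σs - α) := by
  have hdR : (d : ℝ) ≠ 0 := Nat.cast_ne_zero.mpr (by omega)
  have hb1 : (0:ℝ) < b + 1 := by linarith
  set M := σs - αprev with hM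
  set c : ℝ := b / (b + 1) with hc
  have hdiff : α - αprev = c • (M - Phi g M) := by rw [hα, add_sub_cancel_left]
  have hσdiff : σs - σ = (1 / b) • (α - αprev) := by rw [hσ, sub_sub_cancel]
  have hfull : b • (σs - σ) = α - αprev := by
    rw [hσdiff, smul_smul, mul_one_div, div_self hb.ne', one_smul]
  -- trace of M - Phi g M is zero
  have htrM : (M - Phi g M).trace = 0 := by
    unfold Phi
    split_ifs with h
    · simp
    · rw [Matrix.trace_sub, Matrix.trace_add, Matrix.trace_smul, Matrix.trace_smul,
        Matrix.trace_one, dev_trace hdR]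
      simp only [smul_eq_mul, mul_zero, add_zero]
      field_simp
      simp
  have htrα : α.trace = αprev.trace := by
    rw [hα, Matrix.trace_add, Matrix.trace_smul, htrM]
    simp
  have htrσ : σ.trace = σs.trace := by
    rw [hσ, Matrix.trace_sub, Matrix.trace_smul, Matrix.trace_sub, htrα]
    simp
  refine ⟨hdiff, ?_, htrα, htrσ, ?_⟩
  · rw [← hfull, dev_smul]
  -- the projection equation
  have hsubα : σs - α = M - c • (M - Phi g M) := by
    have h1 : σs - α = M - (α - αprev) := by rw [hM]; abel
    rw [h1, hdiff]
  have hσα : σ - α = Phi g M := by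
    have h1 : σ - α = M - (α - αprev) - (1 / b) • (α - αprev) := by
      rw [hσ, hM]; abel
    have hcoef : c + 1 / b * c = 1 := by
      rw [hc]; field_simp
    rw [h1, hdiff, smul_smul, sub_sub, ← add_smul, hcoef, one_smul, sub_sub_cancel]
  rw [hσα, hsubα]
  by_cases hcase : fnorm (dev M) ≤ g
  · have hP : Phi g M = M := Phi_of_le hcase
    rw [hP, sub_self, smul_zero, sub_zero, hP]
  · push_neg at hcase
    set n := fnorm (dev M) with hn
    have hn0 : 0 < n := lt_of_le_of_lt hg hcase
    have hP : Phi g M = (M.trace / (d:ℝ)) • 1 + (g / n) • dev M := Phi_of_gt hcase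
    set s : ℝ := 1 - c * (1 - g / n) with hs
    have hc0 : 0 < c := div_pos hb hb1
    have hc1 : c < 1 := by rw [hc, div_lt_one hb1]; linarith
    have hgn : 0 ≤ g / n := div_nonneg hg hn0.le
    have hs0 : 0 < s := by
      rw [hs]
      rcases le_or_gt (g / n) 1 with h | h
      · nlinarith
      · nlinarith
    have hMP : M - Phi g M = (1 - g / n) • dev M := by
      rw [hP, dev]
      module
    have hN : M - c • (M - Phi g M) = M - (c * (1 - g / n)) • dev M := by
      rw [hMP, smul_smul]
    have hdevN : dev (M - c • (M - Phi g M)) = s • dev M := by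
      rw [hN, dev_sub, dev_smul, dev_of_trace_zero _ (dev_trace hdR M), hs, sub_smul, one_smul]
    have htrN : (M - c • (M - Phi g M)).trace = M.trace := by
      rw [Matrix.trace_sub, Matrix.trace_smul, htrM]
      simp
    have hfn : fnorm (dev (M - c • (M - Phi g M))) = s * n := by
      rw [hdevN, hn, fnorm_smul, abs_of_pos hs0]
    have hsn : s * n = n - c * (n - g) := by
      rw [hs]; field_simp
    have hgt : g < s * n := by
      rw [hsn]
      nlinarith [mul_pos (sub_pos.mpr hc1) (sub_pos.mpr hcase)]
    rw [Phi_of_gt (show g < fnorm (dev (M - c • (M - Phi g M))) by rw [hfn]; exact hgt),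
      hfn, htrN, hdevN, hP, smul_smul]
    congr 2
    field_simp
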